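/- Every OTIMAPP instance that has a feasible solution is also solvable as a pebble motion problem, and there exists a pebble motion instance (on a star with three leaves, with two agents swapping through the center with a spare branch) that is solvable as pebble motion but has no feasible OTIMAPP solution. -/

import Mathlib

open scoped Classical

/-- An OTIMAPP path set: `n` agents, agent `i` follows the path
`loc i 0, loc i 1, ..., loc i (L i)`; `loc i 0` is its start and `loc i (L i)` its goal. -/
structure OTI (V : Type) (n : ℕ) where
  L : Fin n → ℕ
  loc : Fin n → ℕ → V

namespace OTI

variable {V : Type} {n : ℕ}

/-- Activation of agent `i` in configuration `c` (clocks): the agent advances iff it is not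
at the end of its path and its next vertex is unoccupied. -/
noncomputable def step (P : OTI V n) (c : Fin n → ℕ) (i : Fin n) : Fin n → ℕ :=
  if c i < P.L i ∧ ∀ j, j ≠ i → P.loc j (c j) ≠ P.loc i (c i + 1)
  then Function.update c i (c i + 1) else c

/-- Configuration after the first `k` activations of execution `e`. -/
noncomputable def run (P : OTI V n) (e : ℕ → Fin n) : ℕ → Fin n → ℕ
  | 0 => fun _ => 0
  | k + 1 => P.step (P.run e k) (e k)

/-- An execution is fair when every agent is activated infinitely often. -/
def Fair (e : ℕ → Fin n) : Prop := ∀ (i : Fin n) (k : ℕ), ∃ m, k ≤ m ∧ e m = i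

/-- All agents reach their goals after finitely many activations. -/
def Terminates (P : OTI V n) (e : ℕ → Fin n) : Prop :=
  ∃ k, ∀ i, P.run e k i = P.L i

/-- A feasible OTIMAPP solution: every fair execution terminates. -/
def Feasible (P : OTI V n) : Prop := ∀ e, Fair e → P.Terminates e

/-- A configuration (assignment of clocks) is reachable by some execution. -/
def Reachable (P : OTI V n) (c : Fin n → ℕ) : Prop := ∃ e k, P.run e k = c

/-- A potential cyclic deadlock: distinct agents `σ 0, …, σ k` with clock values `t`
such that each agent's next vertex is the next agent's current vertex, cyclically. -/
def PotentialCyclic (P : OTI V n) {k : ℕ} (σ : Fin (k + 1) → Fin n)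
    (t : Fin (k + 1) → ℕ) : Prop :=
  Function.Injective σ ∧ (∀ m, t m < P.L (σ m)) ∧
    ∀ m, P.loc (σ m) (t m + 1) = P.loc (σ (m + 1)) (t (m + 1))

/-- A reachable cyclic deadlock: a potential cyclic deadlock whose clock values are realized
by some reachable configuration. -/
def ReachableCyclic (P : OTI V n) {k : ℕ} (σ : Fin (k + 1) → Fin n)
    (t : Fin (k + 1) → ℕ) : Prop :=
  P.PotentialCyclic σ t ∧ ∃ c, P.Reachable c ∧ ∀ m, c (σ m) = t m

/-- A potential terminal deadlock `(i, j, tj)`: agent `i`'s goal lies on `j`'s path. -/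
def PotentialTerminal (P : OTI V n) (i j : Fin n) (tj : ℕ) : Prop :=
  i ≠ j ∧ tj ≤ P.L j ∧ P.loc i (P.L i) = P.loc j tj

/-- A reachable terminal deadlock: some execution puts `i` at its goal and `j` at clock `tj - 1`. -/
def ReachableTerminal (P : OTI V n) (i j : Fin n) (tj : ℕ) : Prop :=
  P.PotentialTerminal i j tj ∧ ∃ c, P.Reachable c ∧ c i = P.L i ∧ c j + 1 = tj

/-- The path set is a set of paths on graph `G` with starts `s` and goals `g`. -/
def OnGraph (P : OTI V n) (G : SimpleGraph V) (s g : Fin n → V) : Prop :=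
  (∀ i, P.loc i 0 = s i) ∧ (∀ i, P.loc i (P.L i) = g i) ∧
    ∀ i t, t < P.L i → G.Adj (P.loc i t) (P.loc i (t + 1))

/-- A fragment: a nonempty chain of (agent, clock) pairs with distinct agents, where each
agent's next vertex equals the next agent's current vertex. -/
def IsFragment (P : OTI V n) (l : List (Fin n × ℕ)) : Prop :=
  l ≠ [] ∧ (l.map Prod.fst).Nodup ∧ (∀ p ∈ l, p.2 < P.L p.1) ∧
    l.Chain' fun p q => P.loc p.1 (p.2 + 1) = P.loc q.1 q.2

/-- The vertex a fragment starts from. -/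
def fragStart (P : OTI V n) (l : List (Fin n × ℕ)) : Option V :=
  l.head?.map fun p => P.loc p.1 p.2

/-- The vertex a fragment ends at. -/
def fragEnd (P : OTI V n) (l : List (Fin n × ℕ)) : Option V :=
  l.getLast?.map fun p => P.loc p.1 (p.2 + 1)

end OTI

/-- One pebble-motion operation: a single agent moves to an adjacent vacant vertex. -/
def PMStep {V : Type} {n : ℕ} (G : SimpleGraph V) (c c' : Fin n → V) : Prop :=
  ∃ i : Fin n, G.Adj (c i) (c' i) ∧ (∀ j, j ≠ i → c' j = c j) ∧ ∀ j, j ≠ i → c j ≠ c' i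

/-- The pebble motion problem is solvable: finitely many operations bring all agents from
their starts to their goals. -/
def PMSolvable {V : Type} {n : ℕ} (G : SimpleGraph V) (s g : Fin n → V) : Prop :=
  Relation.ReflTransGen (PMStep G) s g

section Aux

variable {V : Type} {n : ℕ}

lemma step_pos (P : OTI V n) (c : Fin n → ℕ) (i : Fin n)
    (h : c i < P.L i ∧ ∀ j, j ≠ i → P.loc j (c j) ≠ P.loc i (c i + 1)) :
    P.step c i = Function.update c i (c i + 1) := by rw [OTI.step, if_pos h]

lemma step_neg (P : OTI V n) (c : Fin n → ℕ) (i : Fin n)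
    (h : ¬(c i < P.L i ∧ ∀ j, j ≠ i → P.loc j (c j) ≠ P.loc i (c i + 1))) :
    P.step c i = c := by rw [OTI.step, if_neg h]

lemma pm_chain_aux (P : OTI V n) (G : SimpleGraph V) (s g : Fin n → V)
    (hOn : P.OnGraph G s g) (e : ℕ → Fin n) (k : ℕ) :
    Relation.ReflTransGen (PMStep G) (fun i => P.loc i 0)
      (fun i => P.loc i (P.run e k i)) := by
  induction k with
  | zero => exact .refl
  | succ k ih =>
    show Relation.ReflTransGen (PMStep G) _ (fun i => P.loc i (P.step (P.run e k) (e k) i))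
    by_cases h : (P.run e k) (e k) < P.L (e k) ∧
        ∀ j, j ≠ e k → P.loc j ((P.run e k) j) ≠ P.loc (e k) ((P.run e k) (e k) + 1)
    · rw [step_pos P _ _ h]
      refine ih.tail ⟨e k, ?_, ?_, ?_⟩
      · simpa [Function.update_self] using hOn.2.2 (e k) _ h.1
      · intro j hj; simp [Function.update_of_ne hj]
      · intro j hj; simpa [Function.update_self] using h.2 j hj
    · rw [step_neg P _ _ h]; exact ih

end Aux

lemma part1 (V : Type) (n : ℕ) (G : SimpleGraph V) (s g : Fin n → V)
    (hP : ∃ P : OTI V n, P.OnGraph G s g ∧ P.Feasible) : PMSolvable G s g := by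
  obtain ⟨P, hOn, hF⟩ := hP
  rcases Nat.eq_zero_or_pos n with hn | hn
  · subst hn
    have : s = g := funext fun i => i.elim0
    rw [this]; exact .refl
  · set e : ℕ → Fin n := fun k => ⟨k % n, Nat.mod_lt _ hn⟩ with he
    have hfair : OTI.Fair e := by
      intro i k
      refine ⟨(k + 1) * n + i.1, ?_, ?_⟩
      · have := i.2; nlinarith [i.2]
      · have : ((k + 1) * n + i.1) % n = i.1 := by rw [Nat.mul_comm, Nat.mul_add_mod]; exact Nat.mod_eq_of_lt i.2
        simp only [he]; exact Fin.ext this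
    obtain ⟨k, hk⟩ := hF e hfair
    have hchain := pm_chain_aux P G s g hOn e k
    have h1 : (fun i => P.loc i 0) = s := funext hOn.1
    have h2 : (fun i => P.loc i (P.run e k i)) = g := by
      funext i; rw [hk i]; exact hOn.2.1 i
    rwa [h1, h2] at hchain

lemma pmstep_mk (c c' : Fin 2 → Fin 4)
    (hadj : (SimpleGraph.fromRel fun a _ => a = (1 : Fin 4)).Adj (c 0) (c' 0))
    (h1 : c' 1 = c 1) (h2 : c 1 ≠ c' 0) :
    PMStep (SimpleGraph.fromRel fun a _ => a = (1 : Fin 4)) c c' := by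
  refine ⟨0, hadj, ?_, ?_⟩ <;> intro j hj <;>
    (have : j = 1 := by revert hj; fin_cases j <;> decide) <;> rw [this]
  · exact h1
  · exact h2

lemma pmstep_mk' (c c' : Fin 2 → Fin 4)
    (hadj : (SimpleGraph.fromRel fun a _ => a = (1 : Fin 4)).Adj (c 1) (c' 1))
    (h1 : c' 0 = c 0) (h2 : c 0 ≠ c' 1) :
    PMStep (SimpleGraph.fromRel fun a _ => a = (1 : Fin 4)) c c' := by
  refine ⟨1, hadj, ?_, ?_⟩ <;> intro j hj <;>
    (have : j = 0 := by revert hj; fin_cases j <;> decide) <;> rw [this]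
  · exact h1
  · exact h2

lemma pm2 : PMSolvable (SimpleGraph.fromRel fun a _ => a = (1 : Fin 4)) ![0, 2] ![3, 1] := by
  have s1 : PMStep (SimpleGraph.fromRel fun a _ => a = (1 : Fin 4)) ![0, 2] ![1, 2] :=
    pmstep_mk _ _ (by rw [SimpleGraph.fromRel_adj]; exact ⟨by decide, Or.inr rfl⟩)
      rfl (by decide)
  have s2 : PMStep (SimpleGraph.fromRel fun a _ => a = (1 : Fin 4)) ![1, 2] ![3, 2] :=
    pmstep_mk _ _ (by rw [SimpleGraph.fromRel_adj]; exact ⟨by decide, Or.inl rfl⟩)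
      rfl (by decide)
  have s3 : PMStep (SimpleGraph.fromRel fun a _ => a = (1 : Fin 4)) ![3, 2] ![3, 1] :=
    pmstep_mk' _ _ (by rw [SimpleGraph.fromRel_adj]; exact ⟨by decide, Or.inr rfl⟩)
      rfl (by decide)
  exact Relation.ReflTransGen.head s1 (Relation.ReflTransGen.head s2 (Relation.ReflTransGen.single s3))

lemma part3 : ¬ ∃ P : OTI (Fin 4) 2,
    P.OnGraph (SimpleGraph.fromRel fun a _ => a = (1 : Fin 4)) ![0, 2] ![3, 1] ∧
    P.Feasible := by
  rintro ⟨P, ⟨hs, hg, hadj⟩, hF⟩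
  have hs0 : P.loc 0 0 = 0 := hs 0
  have hs1 : P.loc 1 0 = 2 := hs 1
  have hg0 : P.loc 0 (P.L 0) = 3 := hg 0
  have hg1 : P.loc 1 (P.L 1) = 1 := hg 1
  have hadj0 : ∀ y : Fin 4, (SimpleGraph.fromRel fun a _ => a = (1 : Fin 4)).Adj 0 y → y = 1 := by
    intro y hy; rw [SimpleGraph.fromRel_adj] at hy
    rcases hy.2 with h | h
    · exact absurd h (by decide)
    · exact h
  have hadjto0 : ∀ x : Fin 4, (SimpleGraph.fromRel fun a _ => a = (1 : Fin 4)).Adj x 0 → x = 1 := by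
    intro x hx; rw [SimpleGraph.fromRel_adj] at hx
    rcases hx.2 with h | h
    · exact h
    · exact absurd h (by decide)
  have hL0 : 0 < P.L 0 := by
    rcases Nat.eq_zero_or_pos (P.L 0) with h | h
    · rw [h, hs0] at hg0; exact absurd hg0 (by decide)
    · exact h
  have h01 : P.loc 0 1 = 1 := by
    have := hadj 0 0 hL0
    rw [hs0] at this
    exact hadj0 _ this
  -- The deadlock invariant
  set I : (Fin 2 → ℕ) → Prop :=
    fun c => c 0 = 0 ∧ P.loc 1 (c 1) = 1 ∧ (c 1 = P.L 1 ∨ P.loc 1 (c 1 + 1) = 0) with hI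
  have hIstep : ∀ (c : Fin 2 → ℕ) (i : Fin 2), I c → I (P.step c i) := by
    rintro c i ⟨h0, h1, h2⟩
    have hone : ∀ j : Fin 2, j ≠ 0 → j = 1 := by
      intro j hj; revert hj; fin_cases j <;> decide
    have hzerocase : ∀ j : Fin 2, j ≠ 1 → j = 0 := by
      intro j hj; revert hj; fin_cases j <;> decide
    have hi : i = 0 ∨ i = 1 := by
      rcases eq_or_ne i 0 with h | h
      · exact Or.inl h
      · exact Or.inr (hone i h)
    rcases hi with rfl | rfl
    · rw [step_neg]
      · exact ⟨h0, h1, h2⟩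
      · rintro ⟨-, hfree⟩
        exact hfree 1 (by simp [Fin.ext_iff]) (by rw [h1, h0]; simp [h01])
    · rcases h2 with hend | hnext
      · rw [step_neg]
        · exact ⟨h0, h1, Or.inl hend⟩
        · rintro ⟨hlt, -⟩; omega
      · rw [step_neg]
        · exact ⟨h0, h1, Or.inr hnext⟩
        · rintro ⟨-, hfree⟩
          exact hfree 0 (by simp [Fin.ext_iff]) (by rw [h0, hs0, hnext])
  set N := P.L 1 with hN
  set e : ℕ → Fin 2 := fun k => if k < N then 1 else if k % 2 = 0 then 0 else 1 with he
  have hrunsucc : ∀ k, P.run e (k + 1) = P.step (P.run e k) (e k) := fun _ => rfl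
  have hphase : ∀ m, m ≤ N → ((P.run e m) 0 = 0 ∧ (P.run e m) 1 = m) ∨ I (P.run e m) := by
    intro m
    induction m with
    | zero => intro _; left; exact ⟨rfl, rfl⟩
    | succ m ih =>
      intro hm
      have hm' : m < N := hm
      have hem : e m = 1 := if_pos hm'
      rcases ih (le_of_lt hm') with ⟨h0, h1⟩ | hI'
      · rw [hrunsucc, hem]
        by_cases hnext : P.loc 1 (m + 1) = 0
        · right
          have hcur : P.loc 1 m = 1 := by
            have := hadj 1 m (hN ▸ hm')
            rw [hnext] at this
            exact hadjto0 _ this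
          rw [step_neg]
          · exact ⟨h0, by rw [h1]; exact hcur, Or.inr (by rw [h1]; exact hnext)⟩
          · rintro ⟨-, hfree⟩
            exact hfree 0 (by simp [Fin.ext_iff]) (by rw [h0, hs0, h1, hnext])
        · left
          rw [step_pos]
          · exact ⟨by rw [Function.update_of_ne (by simp [Fin.ext_iff]), h0],
              by rw [Function.update_self, h1]⟩
          · refine ⟨by rw [h1]; exact hN ▸ hm', ?_⟩
            intro j hj
            have hj0 : j = 0 := by revert hj; fin_cases j <;> decide
            subst hj0
            rw [h0, hs0, h1]
            exact fun h => hnext h.symm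
      · rw [hrunsucc]
        exact Or.inr (hIstep _ _ hI')
  have hIN : I (P.run e N) := by
    rcases hphase N le_rfl with ⟨h0, h1⟩ | hI'
    · exact ⟨h0, by rw [h1]; exact hg1, Or.inl h1⟩
    · exact hI'
  have hIk : ∀ k, I (P.run e (N + k)) := by
    intro k
    induction k with
    | zero => exact hIN
    | succ k ih => rw [← Nat.add_assoc, hrunsucc]; exact hIstep _ _ ih
  have hzero : ∀ k, (P.run e k) 0 = 0 := by
    intro k
    rcases le_or_gt k N with h | h
    · rcases hphase k h with ⟨h0, -⟩ | hI'
      · exact h0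
      · exact hI'.1
    · have := hIk (k - N)
      rw [Nat.add_sub_cancel' (le_of_lt h)] at this
      exact this.1
  have hfair : OTI.Fair e := by
    intro i k
    have hone : i = 0 ∨ i = 1 := by
      have := i.2; rcases eq_or_ne i 0 with h | h
      · exact Or.inl h
      · right; revert h; fin_cases i <;> decide
    rcases hone with rfl | rfl
    · refine ⟨2 * (k + N + 1), by omega, ?_⟩
      rw [he]
      simp only
      rw [if_neg (by omega), if_pos (by omega)]
    · refine ⟨2 * (k + N + 1) + 1, by omega, ?_⟩
      rw [he]
      simp only
      rw [if_neg (by omega), if_neg (by omega)]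
  obtain ⟨k, hk⟩ := hF e hfair
  have := hk 0
  rw [hzero k] at this
  omega

/-- every OTIMAPP instance with a feasible solution is PM-solvable, and the
star instance (center `1` with leaves `0,2,3`; agent 0 from `0` to `3`, agent 1 from `2` to
`1`) is PM-solvable but has no feasible OTIMAPP solution. -/
theorem otimapp_solvable_imp_pm_and_not_conversely :
    (∀ (V : Type) (n : ℕ) (G : SimpleGraph V) (s g : Fin n → V),
      Function.Injective s → Function.Injective g →
      (∃ P : OTI V n, P.OnGraph G s g ∧ P.Feasible) → PMSolvable G s g) ∧
    (Function.Injective (![0, 2] : Fin 2 → Fin 4) ∧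
     Function.Injective (![3, 1] : Fin 2 → Fin 4) ∧
     PMSolvable (SimpleGraph.fromRel fun a _ => a = (1 : Fin 4)) ![0, 2] ![3, 1] ∧
     ¬ ∃ P : OTI (Fin 4) 2,
        P.OnGraph (SimpleGraph.fromRel fun a _ => a = (1 : Fin 4)) ![0, 2] ![3, 1] ∧
        P.Feasible) := by
  exact ⟨fun V n G s g _ _ hP => part1 V n G s g hP, by decide, by decide, pm2, part3⟩
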